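/- Let μ > 0, let N ≥ 2 be even, and let 1 ≤ n ≤ N/2. Let T̃ be the 2n×2n tridiagonal matrix with diagonal entries (d_{N−2n+1} + μ² b_{(N−2n)/2}, d_{N−2n+2}, d_{N−2n+3}, …, d_N), all subdiagonal entries equal to μ and all superdiagonal entries equal to −μ. Then T̃ is invertible, the 2×2 top-left block of T̃⁻¹ (rows 1–2, columns 1–2) equals Ĩ, and for every j = 1, …, n−1 and c ∈ {1,2}: (T̃⁻¹)_{2j+1, c} = −μ · a_{n−j} · (T̃⁻¹)_{2j, c} and (T̃⁻¹)_{2j+2, c} = μ · â_{n−j} · (T̃⁻¹)_{2j, c}. -/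

import Mathlib

/-- The recursive sequence `a_j` (with `d_i = 2i`):
`a_j = (d_{N−2j+2} + a_{j−1}μ²)/(d_{N−2j+1}d_{N−2j+2} + a_{j−1}d_{N−2j+1}μ² + μ²)`, `a_0 = 0`. -/
noncomputable def aSeq (μ : ℝ) (N : ℕ) : ℕ → ℝ
  | 0 => 0
  | j + 1 =>
      (2 * ((N : ℝ) - 2 * ((j : ℝ) + 1) + 2) + aSeq μ N j * μ ^ 2) /
        (2 * ((N : ℝ) - 2 * ((j : ℝ) + 1) + 1) * (2 * ((N : ℝ) - 2 * ((j : ℝ) + 1) + 2)) +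
          aSeq μ N j * (2 * ((N : ℝ) - 2 * ((j : ℝ) + 1) + 1)) * μ ^ 2 + μ ^ 2)

/-- The recursive sequence `â_j`:
`â_j = μ/(d_{N−2j+1}d_{N−2j+2} + a_{j−1}d_{N−2j+1}μ² + μ²)`, `â_0 = 0`. -/
noncomputable def ahatSeq (μ : ℝ) (N : ℕ) : ℕ → ℝ
  | 0 => 0
  | j + 1 =>
      μ / (2 * ((N : ℝ) - 2 * ((j : ℝ) + 1) + 1) * (2 * ((N : ℝ) - 2 * ((j : ℝ) + 1) + 2)) +
          aSeq μ N j * (2 * ((N : ℝ) - 2 * ((j : ℝ) + 1) + 1)) * μ ^ 2 + μ ^ 2)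

/-- The recursive sequence `b_j`:
`b_j = (d_{2j−1} + b_{j−1}μ²)/(d_{2j}d_{2j−1} + b_{j−1}d_{2j}μ² + μ²)`, `b_0 = 0`. -/
noncomputable def bSeq (μ : ℝ) : ℕ → ℝ
  | 0 => 0
  | j + 1 =>
      (2 * (2 * ((j : ℝ) + 1) - 1) + bSeq μ j * μ ^ 2) /
        (2 * (2 * ((j : ℝ) + 1)) * (2 * (2 * ((j : ℝ) + 1) - 1)) +
          bSeq μ j * (2 * (2 * ((j : ℝ) + 1))) * μ ^ 2 + μ ^ 2)

/-- The determinant `D = (d_{N−2n+2} + μ² a_{n−1})(d_{N−2n+1} + μ² b_{(N−2n)/2}) + μ²`. -/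
noncomputable def Dden (μ : ℝ) (N n : ℕ) : ℝ :=
  (2 * (((N - 2 * n : ℕ) : ℝ) + 2) + μ ^ 2 * aSeq μ N (n - 1)) *
      (2 * (((N - 2 * n : ℕ) : ℝ) + 1) + μ ^ 2 * bSeq μ ((N - 2 * n) / 2)) + μ ^ 2

/-- The `2 × 2` matrix `Ĩ = (1/D)·[[d_{N−2n+2} + μ² a_{n−1}, μ], [−μ, d_{N−2n+1} + μ² b_{(N−2n)/2}]]`. -/
noncomputable def Itil (μ : ℝ) (N n : ℕ) : Matrix (Fin 2) (Fin 2) ℝ :=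
  !![(2 * (((N - 2 * n : ℕ) : ℝ) + 2) + μ ^ 2 * aSeq μ N (n - 1)) / Dden μ N n,
      μ / Dden μ N n;
     -μ / Dden μ N n,
      (2 * (((N - 2 * n : ℕ) : ℝ) + 1) + μ ^ 2 * bSeq μ ((N - 2 * n) / 2)) / Dden μ N n]

/-- The `2n × 2n` tridiagonal matrix `T̃` with diagonal
`(d_{N−2n+1} + μ² b_{(N−2n)/2}, d_{N−2n+2}, …, d_N)`, subdiagonal `μ`, superdiagonal `-μ`. -/
noncomputable def Ttil (μ : ℝ) (N n : ℕ) : Matrix (Fin (2 * n)) (Fin (2 * n)) ℝ :=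
  Matrix.of fun i j =>
    if (i : ℕ) = (j : ℕ) then
      (if (i : ℕ) = 0 then
        2 * (((N - 2 * n : ℕ) : ℝ) + 1) + μ ^ 2 * bSeq μ ((N - 2 * n) / 2)
       else 2 * (((N - 2 * n : ℕ) : ℝ) + 1 + ((i : ℕ) : ℝ)))
    else if (i : ℕ) = (j : ℕ) + 1 then μ
    else if (j : ℕ) = (i : ℕ) + 1 then -μ
    else 0

section Aux

lemma bSeq_nonneg (μ : ℝ) : ∀ k, 0 ≤ bSeq μ k := by
  intro k
  induction k with
  | zero => simp [bSeq]
  | succ j ih =>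
    rw [bSeq]
    have h0 : (0:ℝ) ≤ (j:ℝ) := Nat.cast_nonneg j
    have h1 : (0:ℝ) ≤ 2 * (2 * ((j : ℝ) + 1) - 1) := by linarith
    have h2 : (0:ℝ) ≤ 2 * (2 * ((j : ℝ) + 1)) := by linarith
    have h3 := mul_nonneg (mul_nonneg ih h2) (sq_nonneg μ)
    have h4 := mul_nonneg h2 h1
    have h5 := mul_nonneg ih (sq_nonneg μ)
    apply div_nonneg <;> [linarith [sq_nonneg μ]; linarith [sq_nonneg μ]]

lemma aSeq_nonneg (μ : ℝ) (N : ℕ) : ∀ j, 2 * j ≤ N → 0 ≤ aSeq μ N j := by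
  intro j
  induction j with
  | zero => simp [aSeq]
  | succ j ih =>
    intro h
    have hj : 0 ≤ aSeq μ N j := ih (by omega)
    have hc : (2 * (j + 1) : ℝ) ≤ (N : ℝ) := by exact_mod_cast h
    rw [aSeq]
    have h1 : (0:ℝ) ≤ 2 * ((N : ℝ) - 2 * ((j : ℝ) + 1) + 1) := by linarith
    have h2 : (0:ℝ) ≤ 2 * ((N : ℝ) - 2 * ((j : ℝ) + 1) + 2) := by linarith
    have h3 := mul_nonneg (mul_nonneg hj h1) (sq_nonneg μ)
    have h4 := mul_nonneg h1 h2
    have h5 := mul_nonneg hj (sq_nonneg μ)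
    apply div_nonneg <;> [linarith [sq_nonneg μ]; linarith [sq_nonneg μ]]

/-- The denominator in the `a`/`â` recursion is positive. -/
lemma aDen_pos (μ : ℝ) (hμ : 0 < μ) (N j : ℕ) (h : 2 * (j + 1) ≤ N) :
    0 < 2 * ((N : ℝ) - 2 * ((j : ℝ) + 1) + 1) * (2 * ((N : ℝ) - 2 * ((j : ℝ) + 1) + 2)) +
          aSeq μ N j * (2 * ((N : ℝ) - 2 * ((j : ℝ) + 1) + 1)) * μ ^ 2 + μ ^ 2 := by
  have hj : 0 ≤ aSeq μ N j := aSeq_nonneg μ N j (by omega)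
  have hc : (2 * (j + 1) : ℝ) ≤ (N : ℝ) := by exact_mod_cast h
  have h1 : (0:ℝ) ≤ 2 * ((N : ℝ) - 2 * ((j : ℝ) + 1) + 1) := by linarith
  have h2 : (0:ℝ) ≤ 2 * ((N : ℝ) - 2 * ((j : ℝ) + 1) + 2) := by linarith
  have h3 := mul_nonneg (mul_nonneg hj h1) (sq_nonneg μ)
  have h4 := mul_nonneg h1 h2
  have h5 : (0:ℝ) < μ ^ 2 := pow_pos hμ 2
  linarith

/-- Identity I1 : `d_{N-2m+1} a_m + μ â_m = 1`. -/
lemma aSeq_id1 (μ : ℝ) (hμ : 0 < μ) (N m : ℕ) (hm : 1 ≤ m) (h : 2 * m ≤ N) :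
    (2 * ((N : ℝ) - 2 * (m : ℝ) + 1)) * aSeq μ N m + μ * ahatSeq μ N m = 1 := by
  obtain ⟨j, rfl⟩ := Nat.exists_eq_add_of_le hm
  have hD := aDen_pos μ hμ N j (by omega)
  rw [show 1 + j = j + 1 by omega] at *
  rw [aSeq, ahatSeq]
  push_cast
  rw [mul_div_assoc', mul_div_assoc', ← add_div, div_eq_one_iff_eq hD.ne']
  ring

/-- Identity I2 : `(d_{N-2m+2} + μ² a_{m-1}) â_m = μ a_m`. -/
lemma aSeq_id2 (μ : ℝ) (hμ : 0 < μ) (N m : ℕ) (hm : 1 ≤ m) (h : 2 * m ≤ N) :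
    (2 * ((N : ℝ) - 2 * (m : ℝ) + 2) + μ ^ 2 * aSeq μ N (m - 1)) * ahatSeq μ N m
      = μ * aSeq μ N m := by
  obtain ⟨j, rfl⟩ := Nat.exists_eq_add_of_le hm
  have hD := aDen_pos μ hμ N j (by omega)
  rw [show 1 + j = j + 1 by omega] at *
  rw [aSeq, ahatSeq, show j + 1 - 1 = j by omega]
  push_cast
  field_simp

lemma Dden_pos (μ : ℝ) (hμ : 0 < μ) (N n : ℕ) (hn1 : 1 ≤ n) (h2n : 2 * n ≤ N) :
    0 < Dden μ N n := by
  have ha := aSeq_nonneg μ N (n - 1) (by omega)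
  have hb := bSeq_nonneg μ ((N - 2 * n) / 2)
  have hK : (0:ℝ) ≤ ((N - 2 * n : ℕ) : ℝ) := Nat.cast_nonneg _
  have f1 : (0:ℝ) < 2 * (((N - 2 * n : ℕ) : ℝ) + 2) + μ ^ 2 * aSeq μ N (n - 1) := by
    have := mul_nonneg (sq_nonneg μ) ha; linarith
  have f2 : (0:ℝ) < 2 * (((N - 2 * n : ℕ) : ℝ) + 1) + μ ^ 2 * bSeq μ ((N - 2 * n) / 2) := by
    have := mul_nonneg (sq_nonneg μ) hb; linarith
  have := mul_pos f1 f2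
  have h5 : (0:ℝ) < μ ^ 2 := pow_pos hμ 2
  unfold Dden
  linarith

lemma tri_mulVec {m : ℕ} (d : Fin m → ℝ) (μ : ℝ) (x : Fin m → ℝ) (i : Fin m) :
    (Matrix.of fun i j : Fin m =>
      if (i : ℕ) = (j : ℕ) then d i
      else if (i : ℕ) = (j : ℕ) + 1 then μ
      else if (j : ℕ) = (i : ℕ) + 1 then -μ else 0).mulVec x i
    = (if h : 0 < (i : ℕ) then μ * x ⟨(i : ℕ) - 1, by omega⟩ else 0) + d i * x i
      + (if h : (i : ℕ) + 1 < m then -μ * x ⟨(i : ℕ) + 1, h⟩ else 0) := by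
  simp only [Matrix.mulVec, dotProduct, Matrix.of_apply]
  have key : ∀ j : Fin m,
      (if (i : ℕ) = (j : ℕ) then d i
      else if (i : ℕ) = (j : ℕ) + 1 then μ
      else if (j : ℕ) = (i : ℕ) + 1 then -μ else 0) * x j
      = (if j = i then d i * x j else 0)
        + (if h : 0 < (i : ℕ) then (if j = (⟨(i : ℕ) - 1, by omega⟩ : Fin m) then μ * x j else 0) else 0)
        + (if h : (i : ℕ) + 1 < m then (if j = (⟨(i : ℕ) + 1, h⟩ : Fin m) then -μ * x j else 0) else 0) := by
    intro j
    have t2zero : ¬ ((i : ℕ) = (j : ℕ) + 1) →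
        (if h : 0 < (i : ℕ) then (if j = (⟨(i : ℕ) - 1, by omega⟩ : Fin m) then μ * x j else 0) else 0) = 0 := by
      intro hne
      by_cases h2 : 0 < (i : ℕ)
      · rw [dif_pos h2, if_neg]
        intro hc; rw [Fin.ext_iff] at hc; simp only at hc; omega
      · rw [dif_neg h2]
    have t3zero : ¬ ((j : ℕ) = (i : ℕ) + 1) →
        (if h : (i : ℕ) + 1 < m then (if j = (⟨(i : ℕ) + 1, h⟩ : Fin m) then -μ * x j else 0) else 0) = 0 := by
      intro hne
      by_cases h3 : (i : ℕ) + 1 < m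
      · rw [dif_pos h3, if_neg]
        intro hc; rw [Fin.ext_iff] at hc; simp only at hc; omega
      · rw [dif_neg h3]
    by_cases h1 : (i : ℕ) = (j : ℕ)
    · have hji : j = i := by ext; omega
      rw [if_pos h1, if_pos hji, t2zero (by omega), t3zero (by omega)]
      ring
    · have hji : ¬ j = i := by intro hc; subst hc; exact h1 rfl
      rw [if_neg h1, if_neg hji]
      by_cases h2 : (i : ℕ) = (j : ℕ) + 1
      · have hip : 0 < (i : ℕ) := by omega
        have hj2 : j = (⟨(i : ℕ) - 1, by omega⟩ : Fin m) := by ext; simp only; omega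
        rw [if_pos h2, dif_pos hip, if_pos hj2, t3zero (by omega)]
        ring
      · rw [if_neg h2, t2zero h2]
        by_cases h3 : (j : ℕ) = (i : ℕ) + 1
        · have hlt : (i : ℕ) + 1 < m := (h3 ▸ j.isLt)
          have hj3 : j = (⟨(i : ℕ) + 1, hlt⟩ : Fin m) := by ext; simp only; omega
          rw [if_pos h3, dif_pos hlt, if_pos hj3]
          ring
        · rw [if_neg h3, t3zero h3]
          ring
  rw [Finset.sum_congr rfl (fun j _ => key j)]
  rw [Finset.sum_add_distrib, Finset.sum_add_distrib]
  have s1 : (∑ j : Fin m, if j = i then d i * x j else 0) = d i * x i := by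
    rw [Finset.sum_ite_eq' Finset.univ i (fun j => d i * x j)]; simp
  have s2 : (∑ j : Fin m, if h : 0 < (i : ℕ) then
        (if j = (⟨(i : ℕ) - 1, by omega⟩ : Fin m) then μ * x j else 0) else 0)
      = (if h : 0 < (i : ℕ) then μ * x ⟨(i : ℕ) - 1, by omega⟩ else 0) := by
    split_ifs with h
    · rw [Finset.sum_ite_eq' Finset.univ _ (fun j => μ * x j)]; simp
    · simp
  have s3 : (∑ j : Fin m, if h : (i : ℕ) + 1 < m then
        (if j = (⟨(i : ℕ) + 1, h⟩ : Fin m) then -μ * x j else 0) else 0)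
      = (if h : (i : ℕ) + 1 < m then -μ * x ⟨(i : ℕ) + 1, h⟩ else 0) := by
    split_ifs with h
    · rw [Finset.sum_ite_eq' Finset.univ _ (fun j => -μ * x j)]; simp
    · simp
  rw [s1, s2, s3]
  ring

lemma Ttil_det_ne_zero (μ : ℝ) (hμ : 0 < μ) (N n : ℕ) : (Ttil μ N n).det ≠ 0 := by
  have hb := bSeq_nonneg μ
  set dg : Fin (2 * n) → ℝ := fun i =>
    if (i : ℕ) = 0 then 2 * (((N - 2 * n : ℕ) : ℝ) + 1) + μ ^ 2 * bSeq μ ((N - 2 * n) / 2)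
    else 2 * (((N - 2 * n : ℕ) : ℝ) + 1 + ((i : ℕ) : ℝ)) with hdg
  have hdpos : ∀ i : Fin (2 * n), 0 < dg i := by
    intro i
    have hc : (0:ℝ) ≤ ((N - 2 * n : ℕ) : ℝ) := Nat.cast_nonneg _
    have hc2 : (0:ℝ) ≤ ((i : ℕ) : ℝ) := Nat.cast_nonneg _
    have hb2 := mul_nonneg (sq_nonneg μ) (hb ((N - 2 * n) / 2))
    rw [hdg]
    dsimp only
    split_ifs <;> linarith
  set A : Matrix (Fin (2 * n)) (Fin (2 * n)) ℝ := Matrix.of fun i j =>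
    if (i : ℕ) = (j : ℕ) + 1 then μ else if (j : ℕ) = (i : ℕ) + 1 then -μ else 0 with hA
  have hsplit : Ttil μ N n = Matrix.diagonal dg + A := by
    ext i j
    simp only [Ttil, Matrix.of_apply, Matrix.add_apply, Matrix.diagonal_apply, hA, hdg]
    by_cases h1 : (i : ℕ) = (j : ℕ)
    · have hij : i = j := by ext; omega
      subst hij
      have e1 : ¬ ((i : ℕ) = (i : ℕ) + 1) := by omega
      rw [if_pos h1, if_pos rfl, if_neg e1, if_neg e1]
      ring
    · have hij : ¬ i = j := by intro hc; subst hc; exact h1 rfl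
      rw [if_neg h1, if_neg hij, zero_add]
  have hskew : Matrix.transpose A = -A := by
    ext i j
    simp only [Matrix.transpose_apply, Matrix.neg_apply, hA, Matrix.of_apply]
    split_ifs <;> first | ring1 | (exfalso; omega)
  intro hdet
  obtain ⟨v, hv0, hv⟩ := Matrix.exists_mulVec_eq_zero_iff.mpr hdet
  have h0 : dotProduct v ((Ttil μ N n).mulVec v) = 0 := by rw [hv]; simp
  have hAv : dotProduct v (A.mulVec v) = 0 := by
    have e1 : Matrix.vecMul v A = -(A.mulVec v) := by
      have := Matrix.vecMul_transpose (Matrix.transpose A) v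
      rw [Matrix.transpose_transpose] at this
      rw [this, hskew, Matrix.neg_mulVec]
    have e2 : dotProduct v (A.mulVec v) = dotProduct (Matrix.vecMul v A) v :=
      Matrix.dotProduct_mulVec v A v
    rw [e1, neg_dotProduct, dotProduct_comm (A.mulVec v) v] at e2
    linarith
  have hDv : dotProduct v ((Matrix.diagonal dg).mulVec v) = ∑ i, dg i * v i ^ 2 := by
    simp only [dotProduct, Matrix.mulVec_diagonal]
    exact Finset.sum_congr rfl fun i _ => by ring
  rw [hsplit, Matrix.add_mulVec, dotProduct_add, hDv, hAv, add_zero] at h0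
  have hvz : ∀ i : Fin (2 * n), v i = 0 := by
    intro i
    have hterm : ∀ i : Fin (2 * n), i ∈ Finset.univ → 0 ≤ dg i * v i ^ 2 := fun i _ =>
      mul_nonneg (hdpos i).le (sq_nonneg _)
    have hz := (Finset.sum_eq_zero_iff_of_nonneg hterm).mp h0 i (Finset.mem_univ i)
    have hd := hdpos i
    have hsq : v i ^ 2 = 0 := by
      rcases mul_eq_zero.mp hz with h | h
      · exact absurd h hd.ne'
      · exact h
    exact pow_eq_zero_iff (n := 2) (by norm_num) |>.mp hsq
  exact hv0 (funext hvz)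

/-- Odd-row values of the candidate first columns of the inverse. -/
noncomputable def Ycol (μ : ℝ) (N n : ℕ) (c : Fin 2) : ℕ → ℝ
  | 0 => Itil μ N n 1 c
  | j + 1 => μ * ahatSeq μ N (n - (j + 1)) * Ycol μ N n c j

/-- Candidate columns of the inverse matrix. -/
noncomputable def Xcol (μ : ℝ) (N n : ℕ) (c : Fin 2) (i : ℕ) : ℝ :=
  if i = 0 then Itil μ N n 0 c
  else if i % 2 = 1 then Ycol μ N n c (i / 2)
  else -μ * aSeq μ N (n - i / 2) * Ycol μ N n c (i / 2 - 1)

lemma Xcol_zero (μ : ℝ) (N n : ℕ) (c : Fin 2) : Xcol μ N n c 0 = Itil μ N n 0 c := by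
  simp [Xcol]

lemma Xcol_one (μ : ℝ) (N n : ℕ) (c : Fin 2) : Xcol μ N n c 1 = Itil μ N n 1 c := by
  rw [Xcol, if_neg (by omega), if_pos (by norm_num)]
  norm_num [Ycol]

lemma Xcol_odd (μ : ℝ) (N n : ℕ) (c : Fin 2) (j : ℕ) :
    Xcol μ N n c (2 * j + 1) = Ycol μ N n c j := by
  rw [Xcol, if_neg (by omega), if_pos (by omega), show (2 * j + 1) / 2 = j by omega]

lemma Xcol_even (μ : ℝ) (N n : ℕ) (c : Fin 2) (j : ℕ) (hj : 1 ≤ j) :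
    Xcol μ N n c (2 * j) = -μ * aSeq μ N (n - j) * Ycol μ N n c (j - 1) := by
  rw [Xcol, if_neg (by omega), if_neg (by omega), show (2 * j) / 2 = j by omega]

lemma Ttil_mulVec (μ : ℝ) (hμ : 0 < μ) (N n : ℕ) (hn1 : 1 ≤ n) (h2n : 2 * n ≤ N)
    (c : Fin 2) (hc : (c : ℕ) < 2 * n) :
    (Ttil μ N n).mulVec (fun i => Xcol μ N n c (i : ℕ))
      = Pi.single (⟨(c : ℕ), hc⟩ : Fin (2 * n)) 1 := by
  
  funext i
  have hD := Dden_pos μ hμ N n hn1 h2n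
  have hDne : Dden μ N n ≠ 0 := hD.ne'
  have hcv : (c : ℕ) < 2 := c.isLt
  have hKc : ((N - 2 * n : ℕ) : ℝ) = (N : ℝ) - 2 * n := by
    rw [Nat.cast_sub h2n]; push_cast; ring
  have hk : (i : ℕ) < 2 * n := i.isLt
  unfold Ttil
  rw [tri_mulVec]
  simp only [Pi.single_apply, Fin.ext_iff]
  by_cases h0 : (i : ℕ) = 0
  · rw [h0]
    rw [dif_neg (by omega), dif_pos (by omega : 0 + 1 < 2 * n), if_pos rfl,
      Xcol_zero, show (0 + 1 : ℕ) = 1 from rfl, Xcol_one]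
    fin_cases c <;>
      simp only [Itil, Fin.mk_zero, Fin.mk_one, Matrix.cons_val', Matrix.cons_val_zero,
        Matrix.cons_val_one, Matrix.head_cons, Matrix.head_fin_const, Matrix.empty_val',
        Matrix.cons_val_fin_one, Matrix.of_apply, Fin.isValue, Fin.val_zero, Fin.val_one] <;>
      [ (rw [hKc]; norm_num; field_simp; unfold Dden; rw [hKc]; ring);
        (rw [hKc]; norm_num; field_simp; try ring) ]
  · by_cases h1 : (i : ℕ) = 1
    · rw [h1]
      have hthird : (if h : 1 + 1 < 2 * n then -μ * Xcol μ N n c (1 + 1) else 0)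
          = μ ^ 2 * aSeq μ N (n - 1) * Xcol μ N n c 1 := by
        by_cases h2 : 1 + 1 < 2 * n
        · rw [dif_pos h2, show (1 + 1 : ℕ) = 2 * 1 from rfl,
            Xcol_even μ N n c 1 (le_refl 1), show (1 - 1 : ℕ) = 0 from rfl]
          rw [Xcol_one]
          show -μ * (-μ * aSeq μ N (n - 1) * Itil μ N n 1 c) = _
          ring
        · rw [dif_neg h2, show n - 1 = 0 from by omega, aSeq]
          ring
      rw [hthird, dif_pos (by omega : 0 < 1), if_neg (by omega),
        show (1 - 1 : ℕ) = 0 from rfl, Xcol_zero, Xcol_one]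
      fin_cases c <;>
        simp only [Itil, Fin.mk_zero, Fin.mk_one, Matrix.cons_val', Matrix.cons_val_zero,
        Matrix.cons_val_one, Matrix.head_cons, Matrix.head_fin_const, Matrix.empty_val',
        Matrix.cons_val_fin_one, Matrix.of_apply, Fin.isValue, Fin.val_zero, Fin.val_one] <;>
        [ (rw [hKc]; norm_num; field_simp; try ring);
          (rw [hKc]; norm_num; field_simp; unfold Dden; rw [hKc]; ring) ]
    · -- rows with index ≥ 2
      obtain ⟨j1, hj⟩ : ∃ m, (i : ℕ) = 2 * (m + 1) ∨ (i : ℕ) = 2 * (m + 1) + 1 :=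
        ⟨(i : ℕ) / 2 - 1, by omega⟩
      rcases hj with hj | hj
      · -- even row, i = 2 * (j1 + 1)
        have hjn : j1 + 1 ≤ n - 1 := by omega
        rw [hj]
        rw [dif_pos (by omega), if_neg (by omega), dif_pos (by omega : 2 * (j1 + 1) + 1 < 2 * n),
          if_neg (by omega : ¬ (2 * (j1 + 1) = (c : ℕ))),
          show 2 * (j1 + 1) - 1 = 2 * j1 + 1 from by omega, Xcol_odd,
          Xcol_even μ N n c (j1 + 1) (by omega), Nat.add_sub_cancel, Xcol_odd, Ycol]
        have hI := aSeq_id1 μ hμ N (n - (j1 + 1)) (by omega) (by omega)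
        rw [Nat.cast_sub (by omega : j1 + 1 ≤ n)] at hI
        rw [hKc]
        push_cast at hI ⊢
        linear_combination (-(μ * Ycol μ N n c j1)) * hI
      · -- odd row, i = 2 * (j1 + 1) + 1
        have hjn : j1 + 1 ≤ n - 1 := by omega
        rw [hj]
        have hthird : (if h : 2 * (j1 + 1) + 1 + 1 < 2 * n then
              -μ * Xcol μ N n c (2 * (j1 + 1) + 1 + 1) else 0)
            = μ ^ 2 * aSeq μ N (n - (j1 + 1) - 1) * Ycol μ N n c (j1 + 1) := by
        -- two cases
          by_cases h2 : 2 * (j1 + 1) + 1 + 1 < 2 * n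
          · rw [dif_pos h2, show 2 * (j1 + 1) + 1 + 1 = 2 * (j1 + 2) from by omega,
              Xcol_even μ N n c (j1 + 2) (by omega),
              show (j1 + 2) - 1 = j1 + 1 from by omega,
              show n - (j1 + 2) = n - (j1 + 1) - 1 from by omega]
            ring
          · rw [dif_neg h2, show n - (j1 + 1) - 1 = 0 from by omega, aSeq]
            ring
        rw [hthird, dif_pos (by omega), if_neg (by omega),
          if_neg (by omega : ¬ (2 * (j1 + 1) + 1 = (c : ℕ))),
          show 2 * (j1 + 1) + 1 - 1 = 2 * (j1 + 1) from by omega,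
          Xcol_even μ N n c (j1 + 1) (by omega), Nat.add_sub_cancel, Xcol_odd, Ycol]
        have hI := aSeq_id2 μ hμ N (n - (j1 + 1)) (by omega) (by omega)
        rw [Nat.cast_sub (by omega : j1 + 1 ≤ n),
          show n - (j1 + 1) - 1 = n - (j1 + 1) - 1 from rfl] at hI
        rw [hKc]
        push_cast at hI ⊢
        linear_combination (μ * Ycol μ N n c j1) * hI

end Aux

/-- `T̃` is invertible, the top-left `2 × 2` block of `T̃⁻¹` is `Ĩ`, and the first two
columns of `T̃⁻¹` obey the recursions
`(T̃⁻¹)_{2j+1,c} = −μ a_{n−j} (T̃⁻¹)_{2j,c}` and `(T̃⁻¹)_{2j+2,c} = μ â_{n−j} (T̃⁻¹)_{2j,c}`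
(1-based indices). -/
theorem stmt6 (μ : ℝ) (hμ : 0 < μ) (N : ℕ) (hN : 2 ≤ N) (hNe : Even N)
    (n : ℕ) (hn1 : 1 ≤ n) (hn2 : n ≤ N / 2) :
    IsUnit (Ttil μ N n) ∧
    (∀ r s : Fin 2,
      (Ttil μ N n)⁻¹ ⟨(r : ℕ), by have := r.isLt; omega⟩ ⟨(s : ℕ), by have := s.isLt; omega⟩
        = Itil μ N n r s) ∧
    (∀ j : ℕ, ∀ _hj1 : 1 ≤ j, ∀ _hj2 : j ≤ n - 1, ∀ c : Fin 2,
      ((Ttil μ N n)⁻¹ ⟨2 * j, by omega⟩ ⟨(c : ℕ), by have := c.isLt; omega⟩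
          = -μ * aSeq μ N (n - j) *
            (Ttil μ N n)⁻¹ ⟨2 * j - 1, by omega⟩ ⟨(c : ℕ), by have := c.isLt; omega⟩) ∧
      ((Ttil μ N n)⁻¹ ⟨2 * j + 1, by omega⟩ ⟨(c : ℕ), by have := c.isLt; omega⟩
          = μ * ahatSeq μ N (n - j) *
            (Ttil μ N n)⁻¹ ⟨2 * j - 1, by omega⟩ ⟨(c : ℕ), by have := c.isLt; omega⟩)) := by
  classical
  have h2n : 2 * n ≤ N := by omega
  have hdet : (Ttil μ N n).det ≠ 0 := Ttil_det_ne_zero μ hμ N n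
  have hUnit : IsUnit (Ttil μ N n) := (Matrix.isUnit_iff_isUnit_det _).mpr
    (isUnit_iff_ne_zero.mpr hdet)
  have hcol : ∀ (c : Fin 2) (hc : (c : ℕ) < 2 * n) (i : Fin (2 * n)),
      (Ttil μ N n)⁻¹ i ⟨(c : ℕ), hc⟩ = Xcol μ N n c (i : ℕ) := by
    intro c hc i
    have hx := Ttil_mulVec μ hμ N n hn1 h2n c hc
    have h1 : (Ttil μ N n)⁻¹.mulVec (Pi.single (⟨(c : ℕ), hc⟩ : Fin (2 * n)) 1)
        = fun i : Fin (2 * n) => Xcol μ N n c (i : ℕ) := by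
      rw [← hx, Matrix.mulVec_mulVec,
        Matrix.nonsing_inv_mul _ (isUnit_iff_ne_zero.mpr hdet), Matrix.one_mulVec]
    have h2 := congrFun h1 i
    rw [Matrix.mulVec_single] at h2
    simpa using h2
  refine ⟨hUnit, ?_, ?_⟩
  · intro r s
    have hsc : (s : ℕ) < 2 * n := by have := s.isLt; omega
    have := hcol s hsc ⟨(r : ℕ), by have := r.isLt; omega⟩
    rw [this]
    fin_cases r
    · simpa using Xcol_zero μ N n s
    · simpa using Xcol_one μ N n s
  · intro j hj1 hj2 c
    obtain ⟨j', rfl⟩ : ∃ m, j = m + 1 := ⟨j - 1, by omega⟩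
    have hcc : (c : ℕ) < 2 * n := by have := c.isLt; omega
    constructor
    · rw [hcol c hcc, hcol c hcc]
      show Xcol μ N n c (2 * (j' + 1)) = -μ * aSeq μ N (n - (j' + 1)) *
        Xcol μ N n c (2 * (j' + 1) - 1)
      rw [show 2 * (j' + 1) - 1 = 2 * j' + 1 from by omega,
        Xcol_even μ N n c (j' + 1) (by omega), Xcol_odd μ N n c j', Nat.add_sub_cancel]
    · rw [hcol c hcc, hcol c hcc]
      show Xcol μ N n c (2 * (j' + 1) + 1) = μ * ahatSeq μ N (n - (j' + 1)) *
        Xcol μ N n c (2 * (j' + 1) - 1)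
      rw [show 2 * (j' + 1) - 1 = 2 * j' + 1 from by omega,
        Xcol_odd μ N n c (j' + 1), Xcol_odd μ N n c j', Ycol]
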